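/- arXiv:1402.4435 — 6 statements merged into one kernel-verified Lean document; each statement's English description precedes it below -/
import Mathlib

section
/- Assume B⁻v̇B = B⁻v̇N'(v) and v̇⁻¹B⁻v̇ ∩ N'(v) = {1}. Then the map n ↦ B⁻(v̇n) is a bijection from N_{v,w} onto the subset {B⁻g ∈ B⁻\G : g ∈ B⁻v̇B} ∩ {B⁻g ∈ B⁻\G : g ∈ B⁻ẇB⁻} of the coset space B⁻\G. (In the paper this says that x ↦ π(v̄x) induces an isomorphism from N_{v,w} onto the open Richardson stratum R_{v,w} = C^v ∩ C_w of the flag variety, and in particular R_{v,w} = π(B⁻vB ∩ B⁻wB⁻).) -/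
/-- `N(v) = N ∩ v⁻¹ N⁻ v`, i.e. the elements `x ∈ N` with `v * x * v⁻¹ ∈ N⁻`. -/
def NvSet {G : Type*} [Group G] (N Nm : Subgroup G) (v : G) : Set G :=
  {x | x ∈ N ∧ v * x * v⁻¹ ∈ Nm}

/-- `N'(v) = N ∩ v⁻¹ N v`, i.e. the elements `x ∈ N` with `v * x * v⁻¹ ∈ N`. -/
def Nv'Set {G : Type*} [Group G] (N : Subgroup G) (v : G) : Set G :=
  {x | x ∈ N ∧ v * x * v⁻¹ ∈ N}

/-- `O_{v,w} = N ∩ v⁻¹ B⁻ N w`. -/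
def OSet {G : Type*} [Group G] (N Bm : Subgroup G) (v w : G) : Set G :=
  {x | x ∈ N ∧ ∃ b ∈ Bm, ∃ n ∈ N, v * x = b * n * w}

/-- `N_{v,w} = N'(v) ∩ v⁻¹ B⁻ w B⁻`. -/
def NvwSet {G : Type*} [Group G] (N Bm : Subgroup G) (v w : G) : Set G :=
  {x | x ∈ Nv'Set N v ∧ ∃ b₁ ∈ Bm, ∃ b₂ ∈ Bm, v * x = b₁ * w * b₂}

/-- `U_{v,w} = N ∩ B⁻ v N w⁻¹`. -/
def USet {G : Type*} [Group G] (N Bm : Subgroup G) (v w : G) : Set G :=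
  {x | x ∈ N ∧ ∃ b ∈ Bm, ∃ n ∈ N, x = b * v * n * w⁻¹}

/-- Assuming `B⁻ v̇ B = B⁻ v̇ N'(v)` and `v̇⁻¹ B⁻ v̇ ∩ N'(v) = {1}`,
the map `n ↦ B⁻ (v̇ n)` is a bijection from `N_{v,w}` onto the intersection of the
projections of `B⁻ v̇ B` and `B⁻ ẇ B⁻` in the coset space `B⁻ \ G`. -/
theorem stmt0 {G : Type*} [Group G] (Bm B Nm N : Subgroup G)
    (hNmBm : Nm ≤ Bm) (hNB : N ≤ B) (vdot wdot : G)
    (h1 : {x : G | ∃ b₁ ∈ Bm, ∃ b₂ ∈ B, x = b₁ * vdot * b₂}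
        = {x : G | ∃ b ∈ Bm, ∃ n ∈ Nv'Set N vdot, x = b * vdot * n})
    (h2 : ∀ x ∈ Nv'Set N vdot, vdot * x * vdot⁻¹ ∈ Bm → x = 1) :
    Set.BijOn (fun n => Quotient.mk (QuotientGroup.rightRel Bm) (vdot * n))
      (NvwSet N Bm vdot wdot)
      ({q | ∃ g, (∃ b₁ ∈ Bm, ∃ b₂ ∈ B, g = b₁ * vdot * b₂) ∧
            q = Quotient.mk (QuotientGroup.rightRel Bm) g} ∩
       {q | ∃ g, (∃ b₁ ∈ Bm, ∃ b₂ ∈ Bm, g = b₁ * wdot * b₂) ∧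
            q = Quotient.mk (QuotientGroup.rightRel Bm) g}) := by
  refine ⟨?_, ?_, ?_⟩
  · rintro n ⟨⟨hnN, hnc⟩, b₁, hb₁, b₂, hb₂, heq⟩
    refine ⟨⟨vdot * n, ⟨1, Bm.one_mem, n, hNB hnN, by group⟩, rfl⟩,
      ⟨vdot * n, ⟨b₁, hb₁, b₂, hb₂, heq⟩, rfl⟩⟩
  · rintro n₁ ⟨⟨hn₁N, hn₁c⟩, -⟩ n₂ ⟨⟨hn₂N, hn₂c⟩, -⟩ h
    have h' : (vdot * n₂) * (vdot * n₁)⁻¹ ∈ Bm :=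
      QuotientGroup.rightRel_apply.mp (Quotient.exact h)
    have key : n₂ * n₁⁻¹ = 1 := by
      apply h2 (n₂ * n₁⁻¹)
      · refine ⟨N.mul_mem hn₂N (N.inv_mem hn₁N), ?_⟩
        have e : vdot * (n₂ * n₁⁻¹) * vdot⁻¹
            = (vdot * n₂ * vdot⁻¹) * (vdot * n₁ * vdot⁻¹)⁻¹ := by group
        rw [e]; exact N.mul_mem hn₂c (N.inv_mem hn₁c)
      · have e : vdot * (n₂ * n₁⁻¹) * vdot⁻¹ = (vdot * n₂) * (vdot * n₁)⁻¹ := by group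
        rw [e]; exact h'
    exact (eq_of_mul_inv_eq_one key).symm
  · rintro q ⟨⟨g, hg1, hq⟩, g', ⟨c₁, hc₁, c₂, hc₂, hg'⟩, hq'⟩
    have hg2 : g ∈ {x : G | ∃ b ∈ Bm, ∃ n ∈ Nv'Set N vdot, x = b * vdot * n} := by
      rw [← h1]; exact hg1
    obtain ⟨b, hb, n, hn, hgeq⟩ := hg2
    have hc : g' * g⁻¹ ∈ Bm :=
      QuotientGroup.rightRel_apply.mp (Quotient.exact (hq.symm.trans hq'))
    refine ⟨n, ⟨hn, b⁻¹ * (g' * g⁻¹)⁻¹ * c₁, Bm.mul_mem (Bm.mul_mem (Bm.inv_mem hb) (Bm.inv_mem hc)) hc₁, c₂, hc₂, ?_⟩, ?_⟩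
    · have : vdot * n = b⁻¹ * g := by rw [hgeq]; group
      rw [this, hg']; group
    · refine (hq.trans (Quotient.sound ?_)).symm
      refine QuotientGroup.rightRel_apply.mpr ?_
      rw [hgeq]
      have e : vdot * n * (b * vdot * n)⁻¹ = b⁻¹ := by group
      rw [e]; exact Bm.inv_mem hb
end

section
/- Assume B⁻ ∩ N = {1} and v̇⁻¹B⁻v̇ ∩ N ⊆ v̇⁻¹N⁻v̇. Then ζ_{v,w} is a well-defined surjective map from O_{v,w} onto U_{v,w}, and for all x, x' ∈ O_{v,w} one has ζ_{v,w}(x) = ζ_{v,w}(x') if and only if there exists n ∈ N(v) with x' = nx. -/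
/-- Assuming `B⁻ ∩ N = {1}` and `v̇⁻¹ B⁻ v̇ ∩ N ⊆ v̇⁻¹ N⁻ v̇`, the map
`ζ_{v,w} : x ↦ [v̇ x ẇ⁻¹]⁺` is a well-defined surjection from `O_{v,w}` onto `U_{v,w}`,
and `ζ_{v,w}(x) = ζ_{v,w}(x')` iff `x' = n x` for some `n ∈ N(v)`. -/
theorem stmt4 {G : Type*} [Group G] (Bm B Nm N : Subgroup G)
    (hNmBm : Nm ≤ Bm) (hNB : N ≤ B) (vdot wdot : G)
    (hBN : ∀ x : G, x ∈ Bm → x ∈ N → x = 1)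
    (hv : ∀ x ∈ N, vdot * x * vdot⁻¹ ∈ Bm → vdot * x * vdot⁻¹ ∈ Nm)
    (ζ : G → G)
    (hζ : ∀ x ∈ OSet N Bm vdot wdot,
      ζ x ∈ N ∧ ∃ b ∈ Bm, vdot * x * wdot⁻¹ = b * ζ x) :
    (∀ x ∈ OSet N Bm vdot wdot, ζ x ∈ USet N Bm vdot wdot) ∧
    (∀ y ∈ USet N Bm vdot wdot, ∃ x ∈ OSet N Bm vdot wdot, ζ x = y) ∧
    (∀ x ∈ OSet N Bm vdot wdot, ∀ x' ∈ OSet N Bm vdot wdot,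
      (ζ x = ζ x' ↔ ∃ n ∈ NvSet N Nm vdot, x' = n * x)) := by
  refine ⟨?_, ?_, ?_⟩
  · intro x hx
    obtain ⟨hζN, b, hb, heq⟩ := hζ x hx
    refine ⟨hζN, b⁻¹, Bm.inv_mem hb, x, hx.1, ?_⟩
    have h1 : ζ x = b⁻¹ * (vdot * x * wdot⁻¹) := by rw [heq]; group
    rw [h1]; group
  · intro y hy
    obtain ⟨hyN, b, hb, n, hn, heq⟩ := hy
    have hnO : n ∈ OSet N Bm vdot wdot := by
      refine ⟨hn, b⁻¹, Bm.inv_mem hb, y, hyN, ?_⟩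
      rw [heq]; group
    obtain ⟨hζN, b₂, hb₂, heq₂⟩ := hζ n hnO
    refine ⟨n, hnO, ?_⟩
    have key : ζ n * y⁻¹ = b₂⁻¹ * b⁻¹ := by
      have h1 : ζ n = b₂⁻¹ * (vdot * n * wdot⁻¹) := by rw [heq₂]; group
      rw [h1, heq]; group
    have hmemB : ζ n * y⁻¹ ∈ Bm := by
      rw [key]; exact mul_mem (Bm.inv_mem hb₂) (Bm.inv_mem hb)
    have hmemN : ζ n * y⁻¹ ∈ N := mul_mem hζN (N.inv_mem hyN)
    have := hBN _ hmemB hmemN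
    exact mul_inv_eq_one.mp this
  · intro x hx x' hx'
    obtain ⟨hζxN, b, hb, heqx⟩ := hζ x hx
    obtain ⟨hζx'N, b', hb', heqx'⟩ := hζ x' hx'
    constructor
    · intro h
      have hnN : x' * x⁻¹ ∈ N := mul_mem hx'.1 (N.inv_mem hx.1)
      refine ⟨x' * x⁻¹, ⟨hnN, ?_⟩, by group⟩
      apply hv _ hnN
      have e : vdot * (x' * x⁻¹) * vdot⁻¹
          = (vdot * x' * wdot⁻¹) * (vdot * x * wdot⁻¹)⁻¹ := by group
      have e2 : vdot * (x' * x⁻¹) * vdot⁻¹ = b' * b⁻¹ := by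
        rw [e, heqx', heqx, ← h]; group
      rw [e2]; exact mul_mem hb' (Bm.inv_mem hb)
    · rintro ⟨n, ⟨hnN, hnNm⟩, rfl⟩
      have hBmconj : vdot * n * vdot⁻¹ ∈ Bm := hNmBm hnNm
      have h1 : b' * ζ (n * x) = (vdot * n * vdot⁻¹) * (b * ζ x) := by
        rw [← heqx, ← heqx']; group
      have h2 : ζ (n * x) = b'⁻¹ * ((vdot * n * vdot⁻¹) * (b * ζ x)) := by
        rw [eq_inv_mul_iff_mul_eq]; exact h1
      have key : ζ (n * x) * (ζ x)⁻¹ = b'⁻¹ * (vdot * n * vdot⁻¹) * b := by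
        rw [h2]; group
      have hmemB : ζ (n * x) * (ζ x)⁻¹ ∈ Bm := by
        rw [key]; exact mul_mem (mul_mem (Bm.inv_mem hb') hBmconj) hb
      have hmemN : ζ (n * x) * (ζ x)⁻¹ ∈ N := mul_mem hζx'N (N.inv_mem hζxN)
      exact (mul_inv_eq_one.mp (hBN _ hmemB hmemN)).symm
end

section
/- Assume B⁻ ∩ N = {1}, v̇⁻¹B⁻v̇ ∩ N ⊆ v̇⁻¹N⁻v̇, N = N(v)·N'(v), and N(v) ∩ N'(v) = {1}. Then the restriction of ζ_{v,w} to Ω_{v,w} := N'(v) ∩ O_{v,w} is a bijection from Ω_{v,w} onto U_{v,w}. -/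
/-- The restriction of `ζ_{v,w}` to `Ω_{v,w} = N'(v) ∩ O_{v,w}` is a bijection
onto `U_{v,w}`. -/
theorem stmt5 {G : Type*} [Group G] (Bm B Nm N : Subgroup G)
    (hNmBm : Nm ≤ Bm) (hNB : N ≤ B) (vdot wdot : G)
    (hBN : ∀ x : G, x ∈ Bm → x ∈ N → x = 1)
    (hv : ∀ x ∈ N, vdot * x * vdot⁻¹ ∈ Bm → vdot * x * vdot⁻¹ ∈ Nm)
    (hfactv : ∀ x ∈ N, ∃ a ∈ NvSet N Nm vdot, ∃ b ∈ Nv'Set N vdot, x = a * b)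
    (hdisjv : ∀ x : G, x ∈ NvSet N Nm vdot → x ∈ Nv'Set N vdot → x = 1)
    (ζ : G → G)
    (hζ : ∀ x ∈ OSet N Bm vdot wdot,
      ζ x ∈ N ∧ ∃ b ∈ Bm, vdot * x * wdot⁻¹ = b * ζ x) :
    Set.BijOn ζ (Nv'Set N vdot ∩ OSet N Bm vdot wdot) (USet N Bm vdot wdot) := by
  have uniq : ∀ b₁ ∈ Bm, ∀ b₂ ∈ Bm, ∀ n₁ ∈ N, ∀ n₂ ∈ N,
      b₁ * n₁ = b₂ * n₂ → n₁ = n₂ := by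
    intro b₁ hb₁ b₂ hb₂ n₁ hn₁ n₂ hn₂ h
    have h1 : n₂ * n₁⁻¹ = b₂⁻¹ * b₁ := by
      calc n₂ * n₁⁻¹ = b₂⁻¹ * (b₂ * n₂) * n₁⁻¹ := by group
        _ = b₂⁻¹ * (b₁ * n₁) * n₁⁻¹ := by rw [h]
        _ = b₂⁻¹ * b₁ := by group
    have h2 : n₂ * n₁⁻¹ = 1 :=
      hBN _ (h1 ▸ Bm.mul_mem (Bm.inv_mem hb₂) hb₁) (N.mul_mem hn₂ (N.inv_mem hn₁))
    have := mul_eq_one_iff_eq_inv.mp h2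
    simp [this]
  refine ⟨?_, ?_, ?_⟩
  · rintro x ⟨hxv, hxO⟩
    obtain ⟨hζN, b, hb, heq⟩ := hζ x hxO
    refine ⟨hζN, b⁻¹, Bm.inv_mem hb, x, hxO.1, ?_⟩
    calc ζ x = b⁻¹ * (vdot * x * wdot⁻¹) := by rw [heq]; group
      _ = b⁻¹ * vdot * x * wdot⁻¹ := by group
  · rintro x ⟨hxv, hxO⟩ y ⟨hyv, hyO⟩ hxy
    obtain ⟨hζNx, b₁, hb₁, heq₁⟩ := hζ x hxO
    obtain ⟨hζNy, b₂, hb₂, heq₂⟩ := hζ y hyO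
    have key : vdot * (x * y⁻¹) * vdot⁻¹ = b₁ * b₂⁻¹ := by
      calc vdot * (x * y⁻¹) * vdot⁻¹
          = (vdot * x * wdot⁻¹) * (vdot * y * wdot⁻¹)⁻¹ := by group
        _ = (b₁ * ζ x) * (b₂ * ζ y)⁻¹ := by rw [heq₁, heq₂]
        _ = b₁ * b₂⁻¹ := by rw [hxy]; group
    have hmemN : x * y⁻¹ ∈ N := N.mul_mem hxv.1 (N.inv_mem hyv.1)
    have hmemBm : vdot * (x * y⁻¹) * vdot⁻¹ ∈ Bm :=
      key ▸ Bm.mul_mem hb₁ (Bm.inv_mem hb₂)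
    have hconjN : vdot * (x * y⁻¹) * vdot⁻¹ ∈ N := by
      have : vdot * (x * y⁻¹) * vdot⁻¹
          = (vdot * x * vdot⁻¹) * (vdot * y * vdot⁻¹)⁻¹ := by group
      rw [this]
      exact N.mul_mem hxv.2 (N.inv_mem hyv.2)
    have h1 : vdot * (x * y⁻¹) * vdot⁻¹ = 1 :=
      hBN _ (hNmBm (hv _ hmemN hmemBm)) hconjN
    have h2 : x * y⁻¹ = 1 := by
      calc x * y⁻¹ = vdot⁻¹ * (vdot * (x * y⁻¹) * vdot⁻¹) * vdot := by group
        _ = 1 := by rw [h1]; group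
    have := mul_eq_one_iff_eq_inv.mp h2
    simp [this]
  · rintro u ⟨huN, b, hb, n, hn, hu⟩
    obtain ⟨a, ha, x, hx, hnax⟩ := hfactv n hn
    set c : G := (vdot * a * vdot⁻¹)⁻¹ * b⁻¹ with hc
    have hcBm : c ∈ Bm := Bm.mul_mem (Bm.inv_mem (hNmBm ha.2)) (Bm.inv_mem hb)
    have hvx : vdot * x = c * u * wdot := by
      have hvn : vdot * n = b⁻¹ * u * wdot := by
        calc vdot * n = b⁻¹ * (b * vdot * n * wdot⁻¹) * wdot := by group
          _ = b⁻¹ * u * wdot := by rw [← hu]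
      calc vdot * x = (vdot * a * vdot⁻¹)⁻¹ * (vdot * (a * x)) := by group
        _ = (vdot * a * vdot⁻¹)⁻¹ * (vdot * n) := by rw [← hnax]
        _ = (vdot * a * vdot⁻¹)⁻¹ * (b⁻¹ * u * wdot) := by rw [hvn]
        _ = c * u * wdot := by rw [hc]; group
    have hxO : x ∈ OSet N Bm vdot wdot := ⟨hx.1, c, hcBm, u, huN, hvx⟩
    obtain ⟨hζN, b', hb', heq⟩ := hζ x hxO
    have heq2 : b' * ζ x = c * u := by
      rw [← heq]
      calc vdot * x * wdot⁻¹ = (vdot * x) * wdot⁻¹ := by group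
        _ = (c * u * wdot) * wdot⁻¹ := by rw [hvx]
        _ = c * u := by group
    have : ζ x = u := uniq b' hb' c hcBm (ζ x) hζN u huN heq2
    exact ⟨x, ⟨hx, hxO⟩, this⟩
end

section
/- Assume B⁻ ∩ N = {1}, v̇⁻¹B⁻v̇ ∩ N ⊆ v̇⁻¹N⁻v̇, N = N(v)·N'(v), N(v) ∩ N'(v) = {1}, and B⁻ẇB⁻ ⊆ B⁻ẇ(N⁻ ∩ ẇ⁻¹Nẇ). Then ζ_{v,w} restricts to a bijection from N_{v,w} onto U_{v,w} ∩ N(w⁻¹). -/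
/-- `ζ_{v,w}` restricts to a bijection from `N_{v,w}` onto `U_{v,w} ∩ N(w⁻¹)`. -/
theorem stmt6 {G : Type*} [Group G] (Bm B Nm N : Subgroup G)
    (hNmBm : Nm ≤ Bm) (hNB : N ≤ B) (vdot wdot : G)
    (hBN : ∀ x : G, x ∈ Bm → x ∈ N → x = 1)
    (hv : ∀ x ∈ N, vdot * x * vdot⁻¹ ∈ Bm → vdot * x * vdot⁻¹ ∈ Nm)
    (hfactv : ∀ x ∈ N, ∃ a ∈ NvSet N Nm vdot, ∃ b ∈ Nv'Set N vdot, x = a * b)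
    (hdisjv : ∀ x : G, x ∈ NvSet N Nm vdot → x ∈ Nv'Set N vdot → x = 1)
    (hBruhat : {x : G | ∃ b₁ ∈ Bm, ∃ b₂ ∈ Bm, x = b₁ * wdot * b₂}
        ⊆ {x : G | ∃ b ∈ Bm, ∃ m, (m ∈ Nm ∧ wdot * m * wdot⁻¹ ∈ N) ∧ x = b * wdot * m})
    (ζ : G → G)
    (hζ : ∀ x ∈ OSet N Bm vdot wdot,
      ζ x ∈ N ∧ ∃ b ∈ Bm, vdot * x * wdot⁻¹ = b * ζ x) :
    Set.BijOn ζ (NvwSet N Bm vdot wdot)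
      (USet N Bm vdot wdot ∩ NvSet N Nm wdot⁻¹) := by

  -- uniqueness of B⁻N factorization
  have key : ∀ b ∈ Bm, ∀ n ∈ N, ∀ c ∈ Bm, ∀ z ∈ N, b * n = c * z → n = z := by
    intro b hb n hn c hc z hz h
    have h1 : c⁻¹ * b = z * n⁻¹ := by
      rw [eq_mul_inv_iff_mul_eq, mul_assoc, h]; group
    have h2 : c⁻¹ * b = 1 := hBN _ (mul_mem (inv_mem hc) hb) (h1 ▸ mul_mem hz (inv_mem hn))
    have hbc : b = c := by
      have := congrArg (fun t => c * t) h2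
      simpa [mul_assoc] using this
    subst hbc
    exact mul_left_cancel h
  -- key computation: value of ζ on NvwSet
  have main : ∀ x ∈ NvwSet N Bm vdot wdot,
      ζ x ∈ N ∧ (∃ c ∈ Bm, vdot * x * wdot⁻¹ = c * ζ x) ∧ wdot⁻¹ * ζ x * wdot ∈ Nm := by
    rintro x ⟨⟨hxN, hvxv⟩, b₁, hb₁, b₂, hb₂, hfac⟩
    obtain ⟨b, hb, m, ⟨hmNm, hwm⟩, heq⟩ := hBruhat ⟨b₁, hb₁, b₂, hb₂, rfl⟩
    have hxO : x ∈ OSet N Bm vdot wdot :=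
      ⟨hxN, b, hb, wdot * m * wdot⁻¹, hwm, by rw [hfac, heq]; group⟩
    obtain ⟨hζN, c, hc, hceq⟩ := hζ x hxO
    have h1 : vdot * x * wdot⁻¹ = b * (wdot * m * wdot⁻¹) := by rw [hfac, heq]; group
    have hzval : wdot * m * wdot⁻¹ = ζ x := key b hb _ hwm c hc _ hζN (h1.symm.trans hceq)
    refine ⟨hζN, ⟨c, hc, hceq⟩, ?_⟩
    rw [← hzval]
    simpa [mul_assoc] using hmNm
  refine ⟨?_, ?_, ?_⟩
  · -- MapsTo
    intro x hx
    obtain ⟨hζN, ⟨c, hc, hceq⟩, hwzw⟩ := main x hx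
    refine ⟨⟨hζN, c⁻¹, inv_mem hc, x, hx.1.1, ?_⟩, hζN, by simpa using hwzw⟩
    have : c⁻¹ * vdot * x * wdot⁻¹ = c⁻¹ * (vdot * x * wdot⁻¹) := by group
    rw [this, hceq]; group
  · -- InjOn
    intro x hx y hy hxy
    obtain ⟨hζNx, ⟨c, hc, hceq⟩, _⟩ := main x hx
    obtain ⟨hζNy, ⟨d, hd, hdeq⟩, _⟩ := main y hy
    have hxN := hx.1.1; have hyN := hy.1.1
    have hvx := hx.1.2; have hvy := hy.1.2
    have hcd : vdot * (x * y⁻¹) * vdot⁻¹ = c * d⁻¹ := by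
      have h1 : vdot * x = c * ζ x * wdot := by rw [← hceq]; group
      have h2 : vdot * y = d * ζ y * wdot := by rw [← hdeq]; group
      have : vdot * (x * y⁻¹) * vdot⁻¹ = (vdot * x) * (vdot * y)⁻¹ := by group
      rw [this, h1, h2, hxy]; group
    have hBmm : vdot * (x * y⁻¹) * vdot⁻¹ ∈ Bm := hcd ▸ mul_mem hc (inv_mem hd)
    have hNm' : vdot * (x * y⁻¹) * vdot⁻¹ ∈ Nm :=
      hv _ (mul_mem hxN (inv_mem hyN)) hBmm
    have hN' : vdot * (x * y⁻¹) * vdot⁻¹ ∈ N := by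
      have : vdot * (x * y⁻¹) * vdot⁻¹ = (vdot * x * vdot⁻¹) * (vdot * y * vdot⁻¹)⁻¹ := by group
      rw [this]; exact mul_mem hvx (inv_mem hvy)
    have h1 : x * y⁻¹ = 1 :=
      hdisjv _ ⟨mul_mem hxN (inv_mem hyN), hNm'⟩ ⟨mul_mem hxN (inv_mem hyN), hN'⟩
    have := congrArg (fun t => t * y) h1
    simpa [mul_assoc] using this
  · -- SurjOn
    rintro z ⟨⟨hzN, b, hb, n, hn, hzfac⟩, _, hwzw⟩
    obtain ⟨a, ⟨haN, hvav⟩, x, ⟨hxN, hvxv⟩, hna⟩ := hfactv n hn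
    have hvx : vdot * x = ((b * (vdot * a * vdot⁻¹))⁻¹ * z) * wdot := by
      rw [hzfac, hna]; group
    have hbv : b * (vdot * a * vdot⁻¹) ∈ Bm := mul_mem hb (hNmBm hvav)
    have hxNvw : x ∈ NvwSet N Bm vdot wdot := by
      refine ⟨⟨hxN, hvxv⟩, (b * (vdot * a * vdot⁻¹))⁻¹, inv_mem hbv,
        wdot⁻¹ * z * wdot, hNmBm (by simpa using hwzw), ?_⟩
      rw [hvx]; group
    refine ⟨x, hxNvw, ?_⟩
    obtain ⟨hζN, ⟨c, hc, hceq⟩, _⟩ := main x hxNvw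
    have h1 : vdot * x * wdot⁻¹ = (b * (vdot * a * vdot⁻¹))⁻¹ * z := by
      rw [hvx]; group
    exact (key _ (inv_mem hbv) z hzN c hc _ hζN (h1.symm.trans hceq)).symm
end

section
/- (a) For every y ∈ U_{v,w} and every n ∈ N'(w⁻¹), the product yn belongs to U_{v,w}; thus N'(w⁻¹) acts freely on U_{v,w} by right multiplication. (b) Assume B⁻ ∩ N = {1}. Then the conjugation map φ_w(n) := ẇnẇ⁻¹ is a group isomorphism from N'(w) onto N'(w⁻¹), and for every x ∈ O_{v,w} and n ∈ N'(w) one has xn ∈ O_{v,w} and ζ_{v,w}(xn) = ζ_{v,w}(x)·φ_w(n). -/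
/-- (a) `N'(w⁻¹)` acts freely on `U_{v,w}` by right multiplication.
(b) Assuming `B⁻ ∩ N = {1}`, conjugation `φ_w(n) = ẇ n ẇ⁻¹` is a group isomorphism from
`N'(w)` onto `N'(w⁻¹)`, and for `x ∈ O_{v,w}`, `n ∈ N'(w)` one has `x n ∈ O_{v,w}` and
`ζ_{v,w}(x n) = ζ_{v,w}(x) · φ_w(n)`. -/
theorem stmt7 {G : Type*} [Group G] (Bm B Nm N : Subgroup G)
    (hNmBm : Nm ≤ Bm) (hNB : N ≤ B) (vdot wdot : G)
    (hBN : ∀ x : G, x ∈ Bm → x ∈ N → x = 1)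
    (ζ : G → G)
    (hζ : ∀ x ∈ OSet N Bm vdot wdot,
      ζ x ∈ N ∧ ∃ b ∈ Bm, vdot * x * wdot⁻¹ = b * ζ x) :
    ((∀ y ∈ USet N Bm vdot wdot, ∀ n ∈ Nv'Set N wdot⁻¹, y * n ∈ USet N Bm vdot wdot) ∧
     (∀ y ∈ USet N Bm vdot wdot, ∀ n ∈ Nv'Set N wdot⁻¹, y * n = y → n = 1)) ∧
    (Set.BijOn (fun n => wdot * n * wdot⁻¹) (Nv'Set N wdot) (Nv'Set N wdot⁻¹) ∧
     (∀ m n : G, wdot * (m * n) * wdot⁻¹ = (wdot * m * wdot⁻¹) * (wdot * n * wdot⁻¹)) ∧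
     (∀ x ∈ OSet N Bm vdot wdot, ∀ n ∈ Nv'Set N wdot,
       x * n ∈ OSet N Bm vdot wdot ∧ ζ (x * n) = ζ x * (wdot * n * wdot⁻¹))) := by
  refine ⟨⟨?_, ?_⟩, ⟨⟨?_, ?_, ?_⟩, ?_, ?_⟩⟩
  · rintro y ⟨hyN, b, hb, n, hn, hy⟩ m ⟨hmN, hm⟩
    refine ⟨mul_mem hyN hmN, b, hb, n * (wdot⁻¹ * m * wdot⁻¹⁻¹), mul_mem hn hm, ?_⟩
    rw [hy]; group
  · rintro y - m - h
    simpa using mul_left_cancel (h.trans (mul_one y).symm)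
  · rintro n ⟨hn, hwn⟩
    refine ⟨hwn, ?_⟩
    show wdot⁻¹ * (wdot * n * wdot⁻¹) * wdot⁻¹⁻¹ ∈ N
    have h : wdot⁻¹ * (wdot * n * wdot⁻¹) * wdot⁻¹⁻¹ = n := by group
    rw [h]; exact hn
  · intro a _ b _ h
    exact mul_left_cancel (mul_right_cancel h)
  · rintro m ⟨hm, hwm⟩
    refine ⟨wdot⁻¹ * m * wdot, ⟨by simpa [mul_assoc] using hwm, ?_⟩, ?_⟩
    · have : wdot * (wdot⁻¹ * m * wdot) * wdot⁻¹ = m := by group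
      rw [this]; exact hm
    · show wdot * (wdot⁻¹ * m * wdot) * wdot⁻¹ = m
      group
  · intro m n; group
  · rintro x hx n ⟨hnN, hwn⟩
    obtain ⟨hxN, b, hb, n', hn', hvx⟩ := hx
    have hwn' : wdot * n * wdot⁻¹ ∈ N := hwn
    have hxnO : x * n ∈ OSet N Bm vdot wdot := by
      refine ⟨mul_mem hxN hnN, b, hb, n' * (wdot * n * wdot⁻¹), mul_mem hn' hwn', ?_⟩
      rw [← mul_assoc, hvx]; group
    refine ⟨hxnO, ?_⟩
    obtain ⟨hζ1, b1, hb1, heq1⟩ := hζ x ⟨hxN, b, hb, n', hn', hvx⟩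
    obtain ⟨hζ2, b2, hb2, heq2⟩ := hζ (x * n) hxnO
    have key : b2 * ζ (x * n) = b1 * (ζ x * (wdot * n * wdot⁻¹)) := by
      rw [← heq2, ← mul_assoc b1, ← heq1]; group
    have hB : b1⁻¹ * b2 = ζ x * (wdot * n * wdot⁻¹) * (ζ (x * n))⁻¹ := by
      calc b1⁻¹ * b2 = b1⁻¹ * (b2 * ζ (x * n)) * (ζ (x * n))⁻¹ := by group
      _ = b1⁻¹ * (b1 * (ζ x * (wdot * n * wdot⁻¹))) * (ζ (x * n))⁻¹ := by rw [key]
      _ = ζ x * (wdot * n * wdot⁻¹) * (ζ (x * n))⁻¹ := by group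
    have h1 : b1⁻¹ * b2 = 1 := by
      refine hBN _ (mul_mem (inv_mem hb1) hb2) ?_
      rw [hB]
      exact mul_mem (mul_mem hζ1 hwn') (inv_mem hζ2)
    rw [h1] at hB
    calc ζ (x * n) = (ζ x * (wdot * n * wdot⁻¹) * (ζ (x * n))⁻¹)⁻¹ * (ζ x * (wdot * n * wdot⁻¹)) := by group
    _ = 1⁻¹ * (ζ x * (wdot * n * wdot⁻¹)) := by rw [← hB]
    _ = ζ x * (wdot * n * wdot⁻¹) := by group
end

section
/- Assume B⁻ ∩ N = {1}, v̇⁻¹B⁻v̇ ∩ N ⊆ v̇⁻¹N⁻v̇, N = N(v)·N'(v) with N(v) ∩ N'(v) = {1}, N = N(w⁻¹)·N'(w⁻¹) with N(w⁻¹) ∩ N'(w⁻¹) = {1}, and B⁻ẇB⁻ ⊆ B⁻ẇ(N⁻ ∩ ẇ⁻¹Nẇ). Then the multiplication map (n₁, y, n₂) ↦ n₁·y·n₂ is a bijection from N(v) × N_{v,w} × N'(w) onto O_{v,w}. (This is the main structural theorem: every element of the open set O_{v,w} factors uniquely as a product of an element of N(v), an element of N_{v,w}, and an element of N'(w).) 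-/
private lemma NvSet_mul {G : Type*} [Group G] {N Nm : Subgroup G} {v : G} {a b : G}
    (ha : a ∈ NvSet N Nm v) (hb : b ∈ NvSet N Nm v) : a * b ∈ NvSet N Nm v := by
  refine ⟨N.mul_mem ha.1 hb.1, ?_⟩
  have h : v * (a * b) * v⁻¹ = (v * a * v⁻¹) * (v * b * v⁻¹) := by group
  rw [h]; exact Nm.mul_mem ha.2 hb.2

private lemma NvSet_inv {G : Type*} [Group G] {N Nm : Subgroup G} {v : G} {a : G}
    (ha : a ∈ NvSet N Nm v) : a⁻¹ ∈ NvSet N Nm v := by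
  refine ⟨N.inv_mem ha.1, ?_⟩
  have h : v * a⁻¹ * v⁻¹ = (v * a * v⁻¹)⁻¹ := by group
  rw [h]; exact Nm.inv_mem ha.2

private lemma Nv'Set_mul {G : Type*} [Group G] {N : Subgroup G} {v : G} {a b : G}
    (ha : a ∈ Nv'Set N v) (hb : b ∈ Nv'Set N v) : a * b ∈ Nv'Set N v := by
  refine ⟨N.mul_mem ha.1 hb.1, ?_⟩
  have h : v * (a * b) * v⁻¹ = (v * a * v⁻¹) * (v * b * v⁻¹) := by group
  rw [h]; exact N.mul_mem ha.2 hb.2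

private lemma cancel_aux {G : Type*} [Group G] {a b u v : G} (h : a * u = b * v) :
    v * u⁻¹ = b⁻¹ * a := by
  calc v * u⁻¹ = b⁻¹ * (b * v) * u⁻¹ := by group
    _ = b⁻¹ * (a * u) * u⁻¹ := by rw [h]
    _ = b⁻¹ * a := by group

private lemma Nv'Set_inv {G : Type*} [Group G] {N : Subgroup G} {v : G} {a : G}
    (ha : a ∈ Nv'Set N v) : a⁻¹ ∈ Nv'Set N v := by
  refine ⟨N.inv_mem ha.1, ?_⟩
  have h : v * a⁻¹ * v⁻¹ = (v * a * v⁻¹)⁻¹ := by group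
  rw [h]; exact N.inv_mem ha.2

/-- the multiplication map `(n₁, y, n₂) ↦ n₁ y n₂` is a bijection from
`N(v) × N_{v,w} × N'(w)` onto `O_{v,w}`. -/
theorem stmt8 {G : Type*} [Group G] (Bm B Nm N : Subgroup G)
    (hNmBm : Nm ≤ Bm) (hNB : N ≤ B) (vdot wdot : G)
    (hBN : ∀ x : G, x ∈ Bm → x ∈ N → x = 1)
    (hv : ∀ x ∈ N, vdot * x * vdot⁻¹ ∈ Bm → vdot * x * vdot⁻¹ ∈ Nm)
    (hfactv : ∀ x ∈ N, ∃ a ∈ NvSet N Nm vdot, ∃ b ∈ Nv'Set N vdot, x = a * b)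
    (hdisjv : ∀ x : G, x ∈ NvSet N Nm vdot → x ∈ Nv'Set N vdot → x = 1)
    (hfactw : ∀ x ∈ N, ∃ a ∈ NvSet N Nm wdot⁻¹, ∃ b ∈ Nv'Set N wdot⁻¹, x = a * b)
    (hdisjw : ∀ x : G, x ∈ NvSet N Nm wdot⁻¹ → x ∈ Nv'Set N wdot⁻¹ → x = 1)
    (hBruhat : {x : G | ∃ b₁ ∈ Bm, ∃ b₂ ∈ Bm, x = b₁ * wdot * b₂}
        ⊆ {x : G | ∃ b ∈ Bm, ∃ m, (m ∈ Nm ∧ wdot * m * wdot⁻¹ ∈ N) ∧ x = b * wdot * m}) :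
    Set.BijOn (fun p : G × G × G => p.1 * p.2.1 * p.2.2)
      ((NvSet N Nm vdot) ×ˢ ((NvwSet N Bm vdot wdot) ×ˢ (Nv'Set N wdot)))
      (OSet N Bm vdot wdot) := by
  refine ⟨?_, ?_, ?_⟩
  · -- MapsTo
    rintro ⟨n₁, y, n₂⟩ ⟨hn₁, hy, hn₂⟩
    obtain ⟨⟨hyN, hyv⟩, b₁, hb₁, b₂, hb₂, hyeq⟩ := hy
    obtain ⟨c, hc, m, ⟨hm1, hm2⟩, hceq⟩ := hBruhat ⟨b₁, hb₁, b₂, hb₂, hyeq⟩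
    refine ⟨N.mul_mem (N.mul_mem hn₁.1 hyN) hn₂.1,
      (vdot * n₁ * vdot⁻¹) * c, Bm.mul_mem (hNmBm hn₁.2) hc,
      (wdot * m * wdot⁻¹) * (wdot * n₂ * wdot⁻¹), N.mul_mem hm2 hn₂.2, ?_⟩
    have h1 : vdot * (n₁ * y * n₂) = (vdot * n₁ * vdot⁻¹) * (vdot * y) * n₂ := by group
    rw [h1, hceq]
    group
  · -- InjOn
    rintro ⟨n₁, y, n₂⟩ ⟨hn₁, hy, hn₂⟩ ⟨n₁', y', n₂'⟩ ⟨hn₁', hy', hn₂'⟩ heq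
    simp only at heq
    obtain ⟨hyy, b₁, hb₁, b₂, hb₂, hyeq⟩ := hy
    obtain ⟨hyy', b₁', hb₁', b₂', hb₂', hyeq'⟩ := hy'
    obtain ⟨c, hc, m, ⟨hm1, hm2⟩, hceq⟩ := hBruhat ⟨b₁, hb₁, b₂, hb₂, hyeq⟩
    obtain ⟨c', hc', m', ⟨hm1', hm2'⟩, hceq'⟩ := hBruhat ⟨b₁', hb₁', b₂', hb₂', hyeq'⟩
    have E1 : vdot * (n₁ * y * n₂) * wdot⁻¹ =
        ((vdot * n₁ * vdot⁻¹) * c) * ((wdot * m * wdot⁻¹) * (wdot * n₂ * wdot⁻¹)) := by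
      have h : vdot * (n₁ * y * n₂) * wdot⁻¹ =
          (vdot * n₁ * vdot⁻¹) * (vdot * y) * (n₂ * wdot⁻¹) := by group
      rw [h, hceq]; group
    have E2 : vdot * (n₁' * y' * n₂') * wdot⁻¹ =
        ((vdot * n₁' * vdot⁻¹) * c') * ((wdot * m' * wdot⁻¹) * (wdot * n₂' * wdot⁻¹)) := by
      have h : vdot * (n₁' * y' * n₂') * wdot⁻¹ =
          (vdot * n₁' * vdot⁻¹) * (vdot * y') * (n₂' * wdot⁻¹) := by group
      rw [h, hceq']; group
    have E : ((vdot * n₁ * vdot⁻¹) * c) * ((wdot * m * wdot⁻¹) * (wdot * n₂ * wdot⁻¹)) =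
        ((vdot * n₁' * vdot⁻¹) * c') * ((wdot * m' * wdot⁻¹) * (wdot * n₂' * wdot⁻¹)) := by
      rw [← E1, ← E2, heq]
    -- the N-parts agree
    have hU : (wdot * m * wdot⁻¹) * (wdot * n₂ * wdot⁻¹) =
        (wdot * m' * wdot⁻¹) * (wdot * n₂' * wdot⁻¹) := by
      have hU₁N : (wdot * m * wdot⁻¹) * (wdot * n₂ * wdot⁻¹) ∈ N := N.mul_mem hm2 hn₂.2
      have hU₂N : (wdot * m' * wdot⁻¹) * (wdot * n₂' * wdot⁻¹) ∈ N := N.mul_mem hm2' hn₂'.2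
      have ht := cancel_aux E
      have htB : ((wdot * m' * wdot⁻¹) * (wdot * n₂' * wdot⁻¹)) *
          ((wdot * m * wdot⁻¹) * (wdot * n₂ * wdot⁻¹))⁻¹ ∈ Bm := by
        rw [ht]
        exact Bm.mul_mem (Bm.inv_mem (Bm.mul_mem (hNmBm hn₁'.2) hc'))
          (Bm.mul_mem (hNmBm hn₁.2) hc)
      have h1 := hBN _ htB (N.mul_mem hU₂N (N.inv_mem hU₁N))
      exact (mul_inv_eq_one.mp h1).symm
    -- deduce n₂ = n₂'
    have hn2eq : n₂ = n₂' := by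
      have ha₂ : (wdot * m * wdot⁻¹) ∈ NvSet N Nm wdot⁻¹ := by
        refine ⟨hm2, ?_⟩
        have h : wdot⁻¹ * (wdot * m * wdot⁻¹) * wdot⁻¹⁻¹ = m := by group
        rw [h]; exact hm1
      have ha₂' : (wdot * m' * wdot⁻¹) ∈ NvSet N Nm wdot⁻¹ := by
        refine ⟨hm2', ?_⟩
        have h : wdot⁻¹ * (wdot * m' * wdot⁻¹) * wdot⁻¹⁻¹ = m' := by group
        rw [h]; exact hm1'
      have hb₂w : (wdot * n₂ * wdot⁻¹) ∈ Nv'Set N wdot⁻¹ := by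
        refine ⟨hn₂.2, ?_⟩
        have h : wdot⁻¹ * (wdot * n₂ * wdot⁻¹) * wdot⁻¹⁻¹ = n₂ := by group
        rw [h]; exact hn₂.1
      have hb₂w' : (wdot * n₂' * wdot⁻¹) ∈ Nv'Set N wdot⁻¹ := by
        refine ⟨hn₂'.2, ?_⟩
        have h : wdot⁻¹ * (wdot * n₂' * wdot⁻¹) * wdot⁻¹⁻¹ = n₂' := by group
        rw [h]; exact hn₂'.1
      have hs : (wdot * m' * wdot⁻¹)⁻¹ * (wdot * m * wdot⁻¹) =
          (wdot * n₂' * wdot⁻¹) * (wdot * n₂ * wdot⁻¹)⁻¹ := (cancel_aux hU).symm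
      have hs1 : (wdot * m' * wdot⁻¹)⁻¹ * (wdot * m * wdot⁻¹) = 1 := by
        apply hdisjw
        · exact NvSet_mul (NvSet_inv ha₂') ha₂
        · rw [hs]; exact Nv'Set_mul hb₂w' (Nv'Set_inv hb₂w)
      have hs2 : (wdot * n₂' * wdot⁻¹) * (wdot * n₂ * wdot⁻¹)⁻¹ = 1 := by rw [← hs]; exact hs1
      have : wdot * n₂' * wdot⁻¹ = wdot * n₂ * wdot⁻¹ := mul_inv_eq_one.mp hs2
      have h2 : n₂' = n₂ := by
        have := mul_left_cancel (mul_right_cancel this)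
        exact this
      exact h2.symm
    -- deduce n₁ y = n₁' y'
    have h12 : n₁ * y = n₁' * y' := by
      have : n₁ * y * n₂ = n₁' * y' * n₂ := by rw [heq, hn2eq]
      exact mul_right_cancel this
    have ht : n₁'⁻¹ * n₁ = y' * y⁻¹ := (cancel_aux h12).symm
    have ht1 : n₁'⁻¹ * n₁ = 1 := by
      apply hdisjv
      · exact NvSet_mul (NvSet_inv hn₁') hn₁
      · rw [ht]; exact Nv'Set_mul hyy' (Nv'Set_inv hyy)
    have hn1eq : n₁ = n₁' := by
      have := inv_mul_eq_one.mp ht1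
      exact this.symm
    have hyeq2 : y = y' := by
      have h := ht1
      rw [ht] at h
      have := mul_inv_eq_one.mp h
      exact this.symm
    exact Prod.ext hn1eq (Prod.ext hyeq2 hn2eq)
  · -- SurjOn
    rintro x ⟨hxN, b, hb, n, hn, hxe⟩
    obtain ⟨n₁, hn₁, x', hx', hx'eq⟩ := hfactv x hxN
    obtain ⟨a, ha, n', hn', hneq⟩ := hfactw n hn
    set n₂ : G := wdot⁻¹ * n' * wdot with hn₂def
    have hn₂mem : n₂ ∈ Nv'Set N wdot := by
      constructor
      · have h : wdot⁻¹ * n' * wdot⁻¹⁻¹ = n₂ := by rw [hn₂def]; group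
        rw [← h]; exact hn'.2
      · have h : wdot * n₂ * wdot⁻¹ = n' := by rw [hn₂def]; group
        rw [h]; exact hn'.1
    have hy₀N : x' * n₂⁻¹ ∈ N := N.mul_mem hx'.1 (N.inv_mem hn₂mem.1)
    obtain ⟨a', ha', y', hy', hy₀eq⟩ := hfactv _ hy₀N
    -- key equation for y'
    have ex : x = vdot⁻¹ * (b * (a * n') * wdot) := by
      rw [← hneq, ← hxe]; group
    have key : vdot * y' = (((vdot * a' * vdot⁻¹)⁻¹ * (vdot * n₁ * vdot⁻¹)⁻¹ * b)) * wdot *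
        (wdot⁻¹ * a * wdot) := by
      have hy'val : y' = a'⁻¹ * (x' * n₂⁻¹) := by
        rw [hy₀eq]; group
      have hx'val : x' = n₁⁻¹ * x := by rw [hx'eq]; group
      rw [hy'val, hx'val, ex, hn₂def]
      group
    have hy'mem : y' ∈ NvwSet N Bm vdot wdot := by
      refine ⟨hy', (vdot * a' * vdot⁻¹)⁻¹ * (vdot * n₁ * vdot⁻¹)⁻¹ * b, ?_,
        wdot⁻¹ * a * wdot, ?_, key⟩
      · exact Bm.mul_mem (Bm.mul_mem (Bm.inv_mem (hNmBm ha'.2)) (Bm.inv_mem (hNmBm hn₁.2))) hb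
      · apply hNmBm
        have h : wdot⁻¹ * a * wdot = wdot⁻¹ * a * wdot⁻¹⁻¹ := by group
        rw [h]; exact ha.2
    refine ⟨(n₁ * a', y', n₂), ⟨NvSet_mul hn₁ ha', hy'mem, hn₂mem⟩, ?_⟩
    show n₁ * a' * y' * n₂ = x
    calc n₁ * a' * y' * n₂ = n₁ * (a' * y') * n₂ := by group
      _ = n₁ * (x' * n₂⁻¹) * n₂ := by rw [← hy₀eq]
      _ = n₁ * x' := by group
      _ = x := by rw [← hx'eq]
end
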